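/- In linear regression transfer learning with Gaussian data, the regret R(S,T) = L_T(f*_S) − L_T(f*_T) is bounded below by the Wasserstein-based transfer risk C_W(S,T) = W₂(P_{ST}, P_T)², where P_{ST} = Law(f*_S(X_T)) and P_T = Law(f*_T(X_T)). Concretely: for source and target jointly Gaussian data (X_·, Y_·) ∼ N(μ_·, Σ_·) on ℝ^d × ℝ with invertible input covariances, letting w_· = Σ_{·,X}^{-1}Σ_{·,XY}, b_· = μ_{·,Y} − Σ_{·,YX}Σ_{·,X}^{-1}μ_{·,X}, and f*_·(x)=w_·^⊤x+b_·, one has [μ_{T,Y} − μ_{S,Y} − Σ_{S,YX}Σ_{S,X}^{-1}(μ_{T,X}−μ_{S,X})]² + (√(w_S^⊤Σ_{T,X}w_S) − √(w_T^⊤Σ_{T,X}w_T))² ≤ ‖Σ_{T,X}^{1/2}(w_T − w_S)‖² + [μ_{T,Y} − μ_{S,Y} − Σ_{S,YX}Σ_{S,X}^{-1}(μ_{T,X}−μ_{S,X})]². -/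

import Mathlib

open Matrix

section

open scoped ComplexOrder

/-- The square root of a positive semidefinite matrix, as defined in Mathlib (Dec 2024)
under the name `Matrix.PosSemidef.sqrt` (removed since). -/
noncomputable def Matrix.PosSemidef.sqrt {n : Type*} [Fintype n] [DecidableEq n] {𝕜 : Type*}
    [RCLike 𝕜] {A : Matrix n n 𝕜} (hA : A.PosSemidef) : Matrix n n 𝕜 :=
  hA.1.eigenvectorUnitary.1 * diagonal ((↑) ∘ (√·) ∘ hA.1.eigenvalues) *
    (star hA.1.eigenvectorUnitary : Matrix n n 𝕜)

end

lemma Matrix.PosSemidef.sqrt_mul_self {d : ℕ} {A : Matrix (Fin d) (Fin d) ℝ}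
    (hA : A.PosSemidef) : hA.sqrt * hA.sqrt = A := by
  unfold Matrix.PosSemidef.sqrt
  conv_rhs => rw [hA.1.spectral_theorem]
  have hU : (star hA.1.eigenvectorUnitary : Matrix (Fin d) (Fin d) ℝ) *
      hA.1.eigenvectorUnitary.1 = 1 := Unitary.coe_star_mul_self _
  rw [Unitary.conjStarAlgAut_apply]
  simp only [mul_assoc]
  rw [← mul_assoc _ hA.1.eigenvectorUnitary.1, hU, one_mul, ← mul_assoc (diagonal _),
    diagonal_mul_diagonal]
  congr 3
  funext i
  simp [Real.mul_self_sqrt (hA.eigenvalues_nonneg i)]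

lemma Matrix.PosSemidef.sqrt_transpose {d : ℕ} {A : Matrix (Fin d) (Fin d) ℝ}
    (hA : A.PosSemidef) : hA.sqrtᵀ = hA.sqrt := by
  unfold Matrix.PosSemidef.sqrt
  rw [← conjTranspose_eq_transpose_of_trivial]
  simp [Matrix.mul_assoc, Matrix.star_eq_conjTranspose, conjTranspose_eq_transpose_of_trivial]

lemma dot_key {d : ℕ} {A : Matrix (Fin d) (Fin d) ℝ} (hA : A.PosSemidef)
    (v : Fin d → ℝ) : v ⬝ᵥ A.mulVec v = (hA.sqrt.mulVec v) ⬝ᵥ (hA.sqrt.mulVec v) := by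
  conv_lhs => rw [← hA.sqrt_mul_self]
  have hsym : hA.sqrtᵀ = hA.sqrt := hA.sqrt_transpose
  rw [← Matrix.mulVec_mulVec, Matrix.dotProduct_mulVec, ← hsym, Matrix.vecMul_transpose, hsym]

lemma cs {d : ℕ} (u v : Fin d → ℝ) : u ⬝ᵥ v ≤ Real.sqrt (u ⬝ᵥ u) * Real.sqrt (v ⬝ᵥ v) := by
  have h := Finset.sum_mul_sq_le_sq_mul_sq Finset.univ u v
  have huu : (0:ℝ) ≤ u ⬝ᵥ u := Finset.sum_nonneg fun i _ => mul_self_nonneg _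
  have hle : u ⬝ᵥ v ≤ Real.sqrt ((u ⬝ᵥ u) * (v ⬝ᵥ v)) := by
    refine le_trans (le_abs_self _) ?_
    rw [← Real.sqrt_sq_eq_abs]
    apply Real.sqrt_le_sqrt
    simpa [dotProduct, sq] using h
  calc u ⬝ᵥ v ≤ Real.sqrt ((u ⬝ᵥ u) * (v ⬝ᵥ v)) := hle
    _ = Real.sqrt (u ⬝ᵥ u) * Real.sqrt (v ⬝ᵥ v) := Real.sqrt_mul huu _

/-- In Gaussian linear-regression transfer learning, the Wasserstein-based transfer risk
(left side, `W₂(P_ST, P_T)²`) is bounded above by the regret (right side,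
`R(S,T) = ‖Σ_{T,X}^{1/2}(w_T − w_S)‖² + bias²`). -/
theorem transfer_risk_le_regret {d : ℕ}
    (μSX μTX : Fin d → ℝ) (μSY μTY : ℝ)
    (SSX STX : Matrix (Fin d) (Fin d) ℝ) (hSSX : SSX.PosDef) (hSTX : STX.PosDef)
    (SSXY STXY : Fin d → ℝ)
    (wS wT : Fin d → ℝ) (hwS : wS = SSX⁻¹.mulVec SSXY) (hwT : wT = STX⁻¹.mulVec STXY) :
    (μTY - μSY - SSXY ⬝ᵥ SSX⁻¹.mulVec (μTX - μSX)) ^ 2 +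
        (Real.sqrt (wS ⬝ᵥ STX.mulVec wS) - Real.sqrt (wT ⬝ᵥ STX.mulVec wT)) ^ 2 ≤
      (hSTX.posSemidef.sqrt.mulVec (wT - wS)) ⬝ᵥ (hSTX.posSemidef.sqrt.mulVec (wT - wS)) +
        (μTY - μSY - SSXY ⬝ᵥ SSX⁻¹.mulVec (μTX - μSX)) ^ 2 := by
  rw [add_comm (_ ⬝ᵥ _)]
  apply add_le_add_right
  set A := hSTX.posSemidef.sqrt with hA
  set u := A.mulVec wS
  set v := A.mulVec wT
  have hS : wS ⬝ᵥ STX.mulVec wS = u ⬝ᵥ u := dot_key hSTX.posSemidef wS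
  have hT : wT ⬝ᵥ STX.mulVec wT = v ⬝ᵥ v := dot_key hSTX.posSemidef wT
  have hdiff : A.mulVec (wT - wS) = v - u := by
    simp [v, u, Matrix.mulVec_sub]
  rw [hS, hT, hdiff]
  have hu : 0 ≤ u ⬝ᵥ u := by simpa [hS] using hSTX.posSemidef.dotProduct_mulVec_nonneg wS
  have hv : 0 ≤ v ⬝ᵥ v := by simpa [hT] using hSTX.posSemidef.dotProduct_mulVec_nonneg wT
  have hcs : u ⬝ᵥ v ≤ Real.sqrt (u ⬝ᵥ u) * Real.sqrt (v ⬝ᵥ v) := cs u v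
  have e1 : (v - u) ⬝ᵥ (v - u) = v ⬝ᵥ v - 2 * (u ⬝ᵥ v) + u ⬝ᵥ u := by
    simp [sub_dotProduct, dotProduct_sub, dotProduct_comm v u]
    ring
  have e2 : (Real.sqrt (u ⬝ᵥ u) - Real.sqrt (v ⬝ᵥ v)) ^ 2
      = u ⬝ᵥ u + v ⬝ᵥ v - 2 * (Real.sqrt (u ⬝ᵥ u) * Real.sqrt (v ⬝ᵥ v)) := by
    rw [sub_sq, Real.sq_sqrt hu, Real.sq_sqrt hv]; ring
  rw [e1, e2]
  nlinarith [hcs]
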